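/- Let H be a real Hilbert space, let K : H → H be a compact bounded linear operator with ⟨K u, u⟩ ≥ 0 for all u ∈ H, let β > 0, and let N : H → H be continuous, map bounded subsets of H to bounded subsets of H, and satisfy ⟨N u₁ − N u₂, u₁ − u₂⟩ ≤ −β ‖u₁ − u₂‖² for all u₁, u₂ ∈ H. Then for every v ∈ H there exists exactly one u ∈ H with u = K (N u) + K v. -/

import Mathlib

open scoped RealInnerProductSpace
open Module Submodule Set Filter Topology

universe u

private lemma fd_surj_aux :
    ∀ (n : ℕ) (E : Type u) [NormedAddCommGroup E] [InnerProductSpace ℝ E]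
      [FiniteDimensional ℝ E], finrank ℝ E = n →
      ∀ (G : E → E), Continuous G → ∀ (α : ℝ), 0 < α →
      (∀ x y : E, α * ‖x - y‖ ^ 2 ≤ ⟪G x - G y, x - y⟫) → ∀ b : E, ∃ x, G x = b := by
  intro n
  induction n with
  | zero =>
    intro E _ _ _ hn G hG α hα hmono b
    haveI : Subsingleton E := finrank_zero_iff.mp hn
    exact ⟨b, Subsingleton.elim _ _⟩
  | succ n IH =>
    intro E _ _ _ hn G hG α hα hmono b
    have hpos : 0 < finrank ℝ E := hn ▸ n.succ_pos
    haveI : Nontrivial E := Module.finrank_pos_iff.mp hpos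
    obtain ⟨e0, he0⟩ := exists_ne (0 : E)
    set e : E := ‖e0‖⁻¹ • e0 with hedef
    have hne : ‖e‖ = 1 := by
      rw [hedef, norm_smul, norm_inv, norm_norm, inv_mul_cancel₀ (norm_ne_zero_iff.mpr he0)]
    have hee : ⟪e, e⟫ = 1 := by
      rw [real_inner_self_eq_norm_sq, hne]; norm_num
    have he : e ≠ 0 := by
      intro h; rw [h, norm_zero] at hne; norm_num at hne
    set W : Submodule ℝ E := (ℝ ∙ e)ᗮ with hWdef
    have hWrank : finrank ℝ W = n := by
      have h1 : finrank ℝ ↥(ℝ ∙ e) = 1 := finrank_span_singleton he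
      have h2 := Submodule.finrank_add_finrank_orthogonal (K := (ℝ ∙ e : Submodule ℝ E))
      rw [h1, hn, ← hWdef] at h2
      omega
    have hproj : ∀ (z w : E), w ∈ W → ⟪z, w⟫ = ⟪((orthogonalProjection W z : W) : E), w⟫ := by
      intro z w hw
      have h := Submodule.starProjection_inner_eq_zero z w hw
      rw [Submodule.starProjection_apply] at h
      rw [inner_sub_left] at h
      linarith
    have hmain : ∀ (a c : E) (w : W),
        (⟪orthogonalProjection W a - orthogonalProjection W c, w⟫ : ℝ) = ⟪a - c, (w : E)⟫ := by
      intro a c w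
      rw [Submodule.coe_inner, Submodule.coe_sub, inner_sub_left, inner_sub_left,
        ← hproj a _ w.2, ← hproj c _ w.2]
    have heW : ∀ (w : E), w ∈ W → ⟪w, e⟫ = 0 := by
      intro w hw
      rw [real_inner_comm]
      rw [hWdef, Submodule.mem_orthogonal] at hw
      exact hw e (Submodule.mem_span_singleton_self e)
    have hsolve : ∀ t : ℝ, ∃ z : W,
        orthogonalProjection W (G ((z : E) + t • e)) = orthogonalProjection W b := by
      intro t
      refine IH W hWrank (fun z => orthogonalProjection W (G ((z : E) + t • e))) ?_ α hα ?_ _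
      · exact (orthogonalProjection W).continuous.comp
          (hG.comp ((continuous_subtype_val).add continuous_const))
      · intro z y
        have h1 := hmain (G ((z : E) + t • e)) (G ((y : E) + t • e)) (z - y)
        have h2 : ((z - y : W) : E) = (z : E) - (y : E) := by push_cast; ring
        rw [h2] at h1
        rw [h1]
        have h3 : ((z : E) + t • e) - ((y : E) + t • e) = (z : E) - (y : E) := by abel
        have h4 := hmono ((z : E) + t • e) ((y : E) + t • e)
        rw [h3] at h4
        have h5 : ‖z - y‖ = ‖(z : E) - (y : E)‖ := by rw [Submodule.coe_norm, h2]
        rw [h5]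
        exact h4
    choose zf hzf using hsolve
    have htest : ∀ (s t : ℝ) (w : E), w ∈ W →
        ⟪G ((zf t : E) + t • e) - G ((zf s : E) + s • e), w⟫ = 0 := by
      intro s t w hw
      rw [inner_sub_left, hproj (G ((zf t : E) + t • e)) w hw,
        hproj (G ((zf s : E) + s • e)) w hw, hzf, hzf, sub_self]
    have hzcont : Continuous fun t : ℝ => (zf t : E) := by
      rw [continuous_iff_continuousAt]
      intro s
      have hkey : ∀ t : ℝ, ‖(zf t : E) - (zf s : E)‖
          ≤ α⁻¹ * ‖G ((zf s : E) + s • e) - G ((zf s : E) + t • e)‖ := by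
        intro t
        set d : E := (zf t : E) - (zf s : E) with hd
        have hdW : d ∈ W := by rw [hd]; exact sub_mem (zf t).2 (zf s).2
        have h1 : α * ‖d‖ ^ 2
            ≤ ⟪G ((zf t : E) + t • e) - G ((zf s : E) + t • e), d⟫ := by
          have h := hmono ((zf t : E) + t • e) ((zf s : E) + t • e)
          have heq : ((zf t : E) + t • e) - ((zf s : E) + t • e) = d := by rw [hd]; abel
          rwa [heq] at h
        have h3 := htest s t d hdW
        have h2 : (⟪G ((zf t : E) + t • e) - G ((zf s : E) + t • e), d⟫ : ℝ)
            = ⟪G ((zf s : E) + s • e) - G ((zf s : E) + t • e), d⟫ := by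
          rw [inner_sub_left] at h3 ⊢
          rw [inner_sub_left]
          linarith
        rw [h2] at h1
        have h5 : (⟪G ((zf s : E) + s • e) - G ((zf s : E) + t • e), d⟫ : ℝ)
            ≤ ‖G ((zf s : E) + s • e) - G ((zf s : E) + t • e)‖ * ‖d‖ :=
          real_inner_le_norm _ _
        rcases eq_or_lt_of_le (norm_nonneg d) with h0 | h0
        · rw [← h0]; positivity
        · have h6 : α * ‖d‖ ≤ ‖G ((zf s : E) + s • e) - G ((zf s : E) + t • e)‖ := by
            nlinarith
          have h7 := mul_le_mul_of_nonneg_left h6 (le_of_lt (inv_pos.mpr hα))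
          rwa [← mul_assoc, inv_mul_cancel₀ hα.ne', one_mul] at h7
      rw [ContinuousAt, tendsto_iff_norm_sub_tendsto_zero]
      have hub : Tendsto (fun t : ℝ => α⁻¹ * ‖G ((zf s : E) + s • e) - G ((zf s : E) + t • e)‖)
          (𝓝 s) (𝓝 0) := by
        have hc : Tendsto (fun t : ℝ => G ((zf s : E) + t • e)) (𝓝 s)
            (𝓝 (G ((zf s : E) + s • e))) := by
          refine (hG.tendsto _).comp ?_
          have hcc : Continuous fun t : ℝ => (zf s : E) + t • e :=
            continuous_const.add (continuous_id.smul continuous_const)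
          simpa using hcc.tendsto s
        have h8 : Tendsto (fun t : ℝ => ‖G ((zf s : E) + s • e) - G ((zf s : E) + t • e)‖)
            (𝓝 s) (𝓝 0) := by
          have h9 := (Tendsto.sub
            (tendsto_const_nhds (x := G ((zf s : E) + s • e)) (α := ℝ)) hc).norm
          simpa using h9
        simpa using h8.const_mul α⁻¹
      exact squeeze_zero (fun t => norm_nonneg _) hkey hub
    set g : ℝ → ℝ := fun t => ⟪G ((zf t : E) + t • e) - b, e⟫ with hgdef
    have hgcont : Continuous g := by
      apply Continuous.inner
      · exact (hG.comp (hzcont.add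
          ((continuous_id.smul (continuous_const : Continuous fun _ : ℝ => e))))).sub
          continuous_const
      · exact continuous_const
    have hgmono : ∀ s t : ℝ, α * (t - s) ^ 2 ≤ (t - s) * (g t - g s) := by
      intro s t
      have h1 := hmono ((zf t : E) + t • e) ((zf s : E) + s • e)
      set Δw : E := (zf t : E) - (zf s : E) with hΔw
      have hΔwW : Δw ∈ W := by rw [hΔw]; exact sub_mem (zf t).2 (zf s).2
      have hd : ((zf t : E) + t • e) - ((zf s : E) + s • e) = Δw + (t - s) • e := by
        rw [hΔw, sub_smul]; abel
      have horth : ⟪Δw, (t - s) • e⟫ = 0 := by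
        rw [real_inner_smul_right, heW Δw hΔwW]; ring
      have hnorm : ‖Δw + (t - s) • e‖ ^ 2 = ‖Δw‖ ^ 2 + (t - s) ^ 2 := by
        rw [norm_add_sq_real, horth, norm_smul, hne, mul_one, Real.norm_eq_abs, sq_abs]
        ring
      have hinner : (⟪G ((zf t : E) + t • e) - G ((zf s : E) + s • e), Δw + (t - s) • e⟫ : ℝ)
          = (t - s) * (g t - g s) := by
        rw [inner_add_right, htest s t Δw hΔwW, real_inner_smul_right]
        have h9 : (⟪G ((zf t : E) + t • e) - G ((zf s : E) + s • e), e⟫ : ℝ) = g t - g s := by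
          rw [hgdef]
          simp only [inner_sub_left]
          ring
        rw [h9]; ring
      rw [hd, hnorm, hinner] at h1
      nlinarith [sq_nonneg ‖Δw‖, norm_nonneg Δw]
    set T : ℝ := (|g 0| + 1) / α with hT
    have hTpos : 0 < T := by positivity
    have hαT : α * T = |g 0| + 1 := by rw [hT]; field_simp
    have hgT : 1 ≤ g T := by
      have h := hgmono 0 T
      simp only [sub_zero] at h
      nlinarith [abs_nonneg (g 0), neg_abs_le (g 0)]
    have hgT' : g (-T) ≤ -1 := by
      have h := hgmono (-T) 0
      nlinarith [abs_nonneg (g 0), le_abs_self (g 0)]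
    have hivt : ∃ t ∈ Icc (-T) T, g t = 0 := by
      have hsub : Icc (g (-T)) (g T) ⊆ g '' Icc (-T) T :=
        intermediate_value_Icc (by linarith) hgcont.continuousOn
      have h0 : (0 : ℝ) ∈ Icc (g (-T)) (g T) := ⟨by linarith, by linarith⟩
      obtain ⟨t, ht, hgt⟩ := hsub h0
      exact ⟨t, ht, hgt⟩
    obtain ⟨t, _, hgt⟩ := hivt
    refine ⟨(zf t : E) + t • e, ?_⟩
    set r : E := G ((zf t : E) + t • e) - b with hr
    have hrW : orthogonalProjection W r = 0 := by
      rw [hr, map_sub, hzf, sub_self]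
    have hrmem : r ∈ (ℝ ∙ e) := by
      have hmem : r ∈ Wᗮ := Submodule.orthogonalProjectionOnto_eq_zero_iff.mp hrW
      rw [hWdef, Submodule.orthogonal_orthogonal] at hmem
      exact hmem
    obtain ⟨c, hc⟩ := Submodule.mem_span_singleton.mp hrmem
    have hre : ⟪r, e⟫ = 0 := hgt
    rw [← hc, real_inner_smul_left, hee, mul_one] at hre
    have : r = 0 := by rw [← hc, hre, zero_smul]
    rw [hr] at this
    exact sub_eq_zero.mp this

section helpers

variable {E : Type u} [NormedAddCommGroup E] [InnerProductSpace ℝ E]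

private lemma proj_inner' (V : Submodule ℝ E) [HasOrthogonalProjection V]
    (z w : E) (hw : w ∈ V) : ⟪z, w⟫ = ⟪((orthogonalProjection V z : V) : E), w⟫ := by
  have h := Submodule.starProjection_inner_eq_zero z w hw
  rw [Submodule.starProjection_apply] at h
  rw [inner_sub_left] at h
  linarith

private lemma proj_inner (V : Submodule ℝ E) [HasOrthogonalProjection V]
    (a c : E) (w : V) :
    (⟪orthogonalProjection V a - orthogonalProjection V c, w⟫ : ℝ) = ⟪a - c, (w : E)⟫ := by
  rw [Submodule.coe_inner, Submodule.coe_sub, inner_sub_left, inner_sub_left,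
    ← proj_inner' V a _ w.2, ← proj_inner' V c _ w.2]

end helpers

/-- Solvability of strongly monotone continuous equations, given a closed separable
invariant subspace containing the right-hand side (Galerkin approximation). -/
private lemma galerkin_surj {E : Type u} [NormedAddCommGroup E] [InnerProductSpace ℝ E]
    [CompleteSpace E] (F : E → E) (hF : Continuous F) (α : ℝ) (hα : 0 < α)
    (hmono : ∀ x y : E, α * ‖x - y‖ ^ 2 ≤ ⟪F x - F y, x - y⟫)
    (X : Submodule ℝ E) (hXc : IsClosed (X : Set E))
    (hXsep : TopologicalSpace.IsSeparable (X : Set E))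
    (hFX : ∀ x ∈ X, F x ∈ X) (b : E) (hb : b ∈ X) :
    ∃ x ∈ X, F x = b := by
  classical
  -- a dense sequence in X
  haveI : TopologicalSpace.SeparableSpace (X : Set E) := hXsep.separableSpace
  haveI : Nonempty (X : Set E) := ⟨⟨0, X.zero_mem⟩⟩
  obtain ⟨u, hu⟩ := TopologicalSpace.exists_dense_seq (X : Set E)
  set d : ℕ → E := fun n => (u n : E) with hd
  have hdX : ∀ n, d n ∈ X := fun n => (u n).2
  have hXd : (X : Set E) ⊆ closure (Set.range d) := by
    intro x hx
    have h1 : (⟨x, hx⟩ : (X : Set E)) ∈ closure (Set.range u) := hu.closure_range ▸ trivial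
    have h2 : Subtype.val '' closure (Set.range u) ⊆ closure (Subtype.val '' Set.range u) :=
      image_closure_subset_closure_image continuous_subtype_val
    have h3 : x ∈ Subtype.val '' closure (Set.range u) := ⟨⟨x, hx⟩, h1, rfl⟩
    have h4 := h2 h3
    have h5 : Subtype.val '' Set.range u = Set.range d := by
      ext y; constructor
      · rintro ⟨⟨y', hy'⟩, ⟨n, hn⟩, rfl⟩
        exact ⟨n, by show (u n : E) = y'; rw [hn]⟩
      · rintro ⟨n, rfl⟩; exact ⟨u n, ⟨n, rfl⟩, rfl⟩
    rwa [h5] at h4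
  -- the Galerkin subspaces
  set V : ℕ → Submodule ℝ E := fun n => span ℝ (d '' Set.Iio n) with hV
  have hVfd : ∀ n, FiniteDimensional ℝ (V n) := fun n =>
    FiniteDimensional.span_of_finite ℝ ((Set.finite_Iio n).image d)
  have hVX : ∀ n, V n ≤ X := fun n => span_le.mpr (by
    rintro y ⟨i, _, rfl⟩; exact hdX i)
  have hVmono : ∀ {k n : ℕ}, k ≤ n → V k ≤ V n := fun {k n} hkn =>
    span_mono (Set.image_mono (Set.Iio_subset_Iio hkn))
  have hdV : ∀ i, d i ∈ V (i + 1) := fun i =>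
    subset_span ⟨i, Set.mem_Iio.mpr (Nat.lt_succ_self i), rfl⟩
  -- solve the Galerkin problems
  have hsolve : ∀ n : ℕ, ∃ z : V n,
      orthogonalProjection (V n) (F (z : E)) = orthogonalProjection (V n) b := by
    intro n
    haveI := hVfd n
    exact fd_surj_aux (finrank ℝ (V n)) (V n) rfl
      (fun z => orthogonalProjection (V n) (F (z : E)))
      ((orthogonalProjection (V n)).continuous.comp (hF.comp continuous_subtype_val))
      α hα
      (by
        intro z y
        show α * ‖z - y‖ ^ 2 ≤
          ⟪orthogonalProjection (V n) (F (z : E)) - orthogonalProjection (V n) (F (y : E)), z - y⟫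
        have h1 := proj_inner (V n) (F (z : E)) (F (y : E)) (z - y)
        have h2 : ((z - y : V n) : E) = (z : E) - (y : E) := by push_cast; ring
        rw [h2] at h1
        rw [h1, Submodule.coe_norm, h2]
        exact hmono _ _)
      (orthogonalProjection (V n) b)
  choose xs hxs using hsolve
  set xb : ℕ → E := fun n => (xs n : E) with hxb
  have hxbV : ∀ n, xb n ∈ V n := fun n => (xs n).2
  have hxbX : ∀ n, xb n ∈ X := fun n => hVX n (hxbV n)
  have htest : ∀ (n : ℕ) (φ : E), φ ∈ V n → ⟪F (xb n) - b, φ⟫ = 0 := by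
    intro n φ hφ
    haveI := hVfd n
    rw [inner_sub_left, proj_inner' (V n) (F (xb n)) φ hφ, proj_inner' (V n) b φ hφ, hxs,
      sub_self]
  -- uniform bound
  set C : ℝ := ‖b - F 0‖ / α with hC
  have hC0 : 0 ≤ C := by positivity
  have hbound : ∀ n, ‖xb n‖ ≤ C := by
    intro n
    have h1 := hmono (xb n) 0
    rw [sub_zero] at h1
    have h2 := htest n (xb n) (hxbV n)
    have h3 : (⟪F (xb n) - F 0, xb n⟫ : ℝ) = ⟪F (xb n) - b, xb n⟫ + ⟪b - F 0, xb n⟫ := by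
      rw [inner_sub_left, inner_sub_left, inner_sub_left]; ring
    rw [h3, h2, zero_add] at h1
    have h4 : (⟪b - F 0, xb n⟫ : ℝ) ≤ ‖b - F 0‖ * ‖xb n‖ := real_inner_le_norm _ _
    rcases eq_or_lt_of_le (norm_nonneg (xb n)) with h0 | h0
    · rw [← h0]; exact hC0
    · have h5 : α * ‖xb n‖ ≤ ‖b - F 0‖ := by nlinarith
      rw [hC, le_div_iff₀ hα]
      linarith [h5]
  -- the weak limit along an ultrafilter
  set 𝒰 : Ultrafilter ℕ := Ultrafilter.of atTop with h𝒰def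
  have h𝒰 : (𝒰 : Filter ℕ) ≤ atTop := Ultrafilter.of_le _
  have hconv : ∀ y : E, ∃ r : ℝ, |r| ≤ C * ‖y‖ ∧
      Tendsto (fun n => (⟪xb n, y⟫ : ℝ)) 𝒰 (𝓝 r) := by
    intro y
    have hmem : ∀ n, (⟪xb n, y⟫ : ℝ) ∈ Set.Icc (-(C * ‖y‖)) (C * ‖y‖) := by
      intro n
      have h1 : |(⟪xb n, y⟫ : ℝ)| ≤ ‖xb n‖ * ‖y‖ := abs_real_inner_le_norm _ _
      have h2 : ‖xb n‖ * ‖y‖ ≤ C * ‖y‖ :=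
        mul_le_mul_of_nonneg_right (hbound n) (norm_nonneg y)
      exact abs_le.mp (le_trans h1 h2)
    have hle : (Ultrafilter.map (fun n => (⟪xb n, y⟫ : ℝ)) 𝒰 : Filter ℝ)
        ≤ 𝓟 (Set.Icc (-(C * ‖y‖)) (C * ‖y‖)) := by
      rw [le_principal_iff]
      exact Filter.mem_map.mpr (Filter.univ_mem' hmem)
    obtain ⟨r, hrs, hrle⟩ := isCompact_Icc.ultrafilter_le_nhds
      (Ultrafilter.map (fun n => (⟪xb n, y⟫ : ℝ)) 𝒰) hle
    exact ⟨r, abs_le.mpr ⟨hrs.1, hrs.2⟩, hrle⟩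
  choose ℓ hℓabs hℓtend using hconv
  have hadd : ∀ y z : E, ℓ (y + z) = ℓ y + ℓ z := by
    intro y z
    have h1 : Tendsto (fun n => (⟪xb n, y + z⟫ : ℝ)) 𝒰 (𝓝 (ℓ y + ℓ z)) := by
      have h2 := (hℓtend y).add (hℓtend z)
      simpa [inner_add_right] using h2
    exact tendsto_nhds_unique (hℓtend (y + z)) h1
  have hsmul : ∀ (c : ℝ) (y : E), ℓ (c • y) = c * ℓ y := by
    intro c y
    have h1 : Tendsto (fun n => (⟪xb n, c • y⟫ : ℝ)) 𝒰 (𝓝 (c * ℓ y)) := by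
      have h2 := (hℓtend y).const_mul c
      simpa [real_inner_smul_right] using h2
    exact tendsto_nhds_unique (hℓtend (c • y)) h1
  set Llin : E →ₗ[ℝ] ℝ :=
    { toFun := ℓ, map_add' := hadd, map_smul' := hsmul } with hLlin
  set L : E →L[ℝ] ℝ := Llin.mkContinuous C (fun y => by
    rw [hLlin]; simpa [Real.norm_eq_abs] using hℓabs y) with hL
  set x : E := (InnerProductSpace.toDual ℝ E).symm L with hx
  have hxy : ∀ y : E, (⟪x, y⟫ : ℝ) = ℓ y := by
    intro y
    rw [hx]
    exact InnerProductSpace.toDual_symm_apply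
  have hweak : ∀ y : E, Tendsto (fun n => (⟪xb n, y⟫ : ℝ)) 𝒰 (𝓝 (⟪x, y⟫ : ℝ)) := by
    intro y; rw [hxy]; exact hℓtend y
  -- x belongs to X
  haveI : CompleteSpace (X : Set E) := hXc.completeSpace_coe
  have hxX : x ∈ X := by
    rw [← Submodule.orthogonal_orthogonal X]
    rw [Submodule.mem_orthogonal]
    intro v hv
    have h1 : ∀ n, (⟪xb n, v⟫ : ℝ) = 0 := by
      intro n
      rw [Submodule.mem_orthogonal] at hv
      exact hv (xb n) (hxbX n)
    have h2 : Tendsto (fun n => (⟪xb n, v⟫ : ℝ)) 𝒰 (𝓝 0) := by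
      simp only [h1]; exact tendsto_const_nhds
    have h3 : (⟪x, v⟫ : ℝ) = 0 := tendsto_nhds_unique (hweak v) h2
    rw [real_inner_comm] at h3
    exact h3
  -- the Minty inequality
  have hminty : ∀ y ∈ (X : Set E), 0 ≤ (⟪b - F y, x - y⟫ : ℝ) := by
    have hVcase : ∀ (k : ℕ) (y : E), y ∈ V k → 0 ≤ (⟪b - F y, x - y⟫ : ℝ) := by
      intro k y hy
      have hev : ∀ n, k ≤ n → 0 ≤ (⟪b - F y, xb n - y⟫ : ℝ) := by
        intro n hkn
        have h1 : 0 ≤ α * ‖xb n - y‖ ^ 2 := by positivity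
        have h2 := hmono (xb n) y
        have h3 := htest n (xb n - y) (sub_mem (hxbV n) (hVmono hkn hy))
        have h4 : (⟪F (xb n) - F y, xb n - y⟫ : ℝ)
            = ⟪F (xb n) - b, xb n - y⟫ + ⟪b - F y, xb n - y⟫ := by
          rw [inner_sub_left, inner_sub_left, inner_sub_left]; ring
        rw [h4, h3, zero_add] at h2
        linarith
      have htendm : Tendsto (fun n => (⟪b - F y, xb n - y⟫ : ℝ)) 𝒰
          (𝓝 (⟪b - F y, x - y⟫ : ℝ)) := by
        have h5 : ∀ n, (⟪b - F y, xb n - y⟫ : ℝ) = ⟪xb n, b - F y⟫ - ⟪b - F y, y⟫ := by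
          intro n; rw [inner_sub_right, real_inner_comm (b - F y) (xb n)]
        have h6 : (⟪b - F y, x - y⟫ : ℝ) = ⟪x, b - F y⟫ - ⟪b - F y, y⟫ := by
          rw [inner_sub_right, real_inner_comm (b - F y) x]
        simp only [h5, h6]
        exact (hweak (b - F y)).sub tendsto_const_nhds
      refine ge_of_tendsto htendm ?_
      exact (eventually_atTop.mpr ⟨k, hev⟩).filter_mono h𝒰
    intro y hy
    have hclosed : IsClosed {y : E | 0 ≤ (⟪b - F y, x - y⟫ : ℝ)} := by
      apply isClosed_le continuous_const
      exact Continuous.inner (continuous_const.sub hF) (continuous_const.sub continuous_id)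
    have hrange : Set.range d ⊆ {y : E | 0 ≤ (⟪b - F y, x - y⟫ : ℝ)} := by
      rintro _ ⟨i, rfl⟩
      exact hVcase (i + 1) (d i) (hdV i)
    have := closure_minimal hrange hclosed
    exact this (hXd hy)
  -- conclude F x = b
  set r : E := b - F x with hr
  have hrX : r ∈ X := X.sub_mem hb (hFX x hxX)
  have hnn : ∀ z ∈ X, 0 ≤ (⟪r, z⟫ : ℝ) := by
    intro z hz
    have h0 : ∀ m : ℕ, 0 ≤ (⟪b - F (x - (1 / (m + 1 : ℝ)) • z), z⟫ : ℝ) := by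
      intro m
      have htm : 0 < (1 / (m + 1 : ℝ)) := by positivity
      have hym : x - (1 / (m + 1 : ℝ)) • z ∈ X := X.sub_mem hxX (X.smul_mem _ hz)
      have h1 := hminty _ hym
      have h2 : x - (x - (1 / (m + 1 : ℝ)) • z) = (1 / (m + 1 : ℝ)) • z := by abel
      rw [h2, real_inner_smul_right] at h1
      exact nonneg_of_mul_nonneg_right h1 htm
    have htt : Tendsto (fun m : ℕ => (⟪b - F (x - (1 / (m + 1 : ℝ)) • z), z⟫ : ℝ)) atTop
        (𝓝 (⟪b - F x, z⟫ : ℝ)) := by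
      have h1 : Tendsto (fun m : ℕ => x - (1 / (m + 1 : ℝ)) • z) atTop (𝓝 x) := by
        have h2 := tendsto_one_div_add_atTop_nhds_zero_nat (𝕜 := ℝ)
        have h3 := (tendsto_const_nhds (x := x) (α := ℕ)).sub (h2.smul_const z)
        simpa using h3
      have h4 : Continuous fun w : E => (⟪b - F w, z⟫ : ℝ) :=
        Continuous.inner (continuous_const.sub hF) continuous_const
      exact (h4.tendsto x).comp h1
    exact ge_of_tendsto htt (Eventually.of_forall h0)
  have h1 := hnn r hrX
  have h2 := hnn (-r) (X.neg_mem hrX)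
  rw [inner_neg_right] at h2
  have h3 : (⟪r, r⟫ : ℝ) = 0 := le_antisymm (by linarith) h1
  have h4 : r = 0 := inner_self_eq_zero.mp h3
  rw [hr] at h4
  exact ⟨x, hxX, (sub_eq_zero.mp h4).symm⟩

private lemma exists_invariant {H : Type u} [NormedAddCommGroup H] [InnerProductSpace ℝ H]
    (K : H →L[ℝ] H) (N : H → H) (hNcont : Continuous N) (v : H) :
    ∃ X : Submodule ℝ H, IsClosed (X : Set H) ∧ TopologicalSpace.IsSeparable (X : Set H) ∧
      v ∈ X ∧ (∀ x ∈ X, K x ∈ X) ∧ (∀ x ∈ X, N x ∈ X) := by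
  classical
  set S : ℕ → Set H := fun n => Nat.rec {v}
    (fun _ Sn => (Sn ∪ (⇑K '' closure ((span ℝ Sn : Submodule ℝ H) : Set H)))
      ∪ (N '' closure ((span ℝ Sn : Submodule ℝ H) : Set H))) n with hS
  have hSsucc : ∀ n, S (n + 1) = (S n ∪ (⇑K '' closure ((span ℝ (S n) : Submodule ℝ H) : Set H)))
      ∪ (N '' closure ((span ℝ (S n) : Submodule ℝ H) : Set H)) := fun n => rfl
  have hSsep : ∀ n, TopologicalSpace.IsSeparable (S n) := by
    intro n
    induction n with
    | zero => exact (Set.countable_singleton v).isSeparable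
    | succ n ih =>
      rw [hSsucc]
      exact (ih.union ((ih.span.closure).image K.continuous)).union
        ((ih.span.closure).image hNcont)
  set X : Submodule ℝ H := (span ℝ (⋃ n, S n)).topologicalClosure with hX
  have hXc : IsClosed (X : Set H) := Submodule.isClosed_topologicalClosure _
  have hXsep : TopologicalSpace.IsSeparable (X : Set H) := by
    have h1 : TopologicalSpace.IsSeparable (⋃ n, S n) := TopologicalSpace.IsSeparable.iUnion hSsep
    have h2 := (h1.span (R := ℝ)).closure
    rw [hX, Submodule.topologicalClosure_coe]
    exact h2
  have hSmono : ∀ n, S n ⊆ S (n + 1) := by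
    intro n
    rw [hSsucc]
    exact Set.Subset.trans Set.subset_union_left Set.subset_union_left
  have hXsub : (X : Set H) ⊆ closure (⋃ n, closure ((span ℝ (S n) : Submodule ℝ H) : Set H)) := by
    rw [hX, Submodule.topologicalClosure_coe]
    apply closure_mono
    have hdir : span ℝ (⋃ n, S n) = ⨆ n, span ℝ (S n) := Submodule.span_iUnion S
    have hmono : Monotone fun n => (span ℝ (S n) : Submodule ℝ H) :=
      monotone_nat_of_le_succ fun n => span_mono (hSmono n)
    have hcoe : ((⨆ n, span ℝ (S n) : Submodule ℝ H) : Set H)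
        = ⋃ n, ((span ℝ (S n) : Submodule ℝ H) : Set H) :=
      Submodule.coe_iSup_of_directed _ hmono.directed_le
    intro x hx
    have hx2 : x ∈ ((⨆ n, span ℝ (S n) : Submodule ℝ H) : Set H) := by
      rw [← hdir]; exact hx
    rw [hcoe] at hx2
    obtain ⟨n, hn⟩ := Set.mem_iUnion.mp hx2
    exact Set.mem_iUnion.mpr ⟨n, subset_closure hn⟩
  have hclX : closure (⋃ n, S n) ⊆ (X : Set H) :=
    closure_minimal (Set.Subset.trans Submodule.subset_span (Submodule.le_topologicalClosure _))
      hXc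
  have hKi : ∀ x ∈ X, K x ∈ X := by
    intro x hx
    have h2 : K x ∈ closure (⇑K '' (⋃ n, closure ((span ℝ (S n) : Submodule ℝ H) : Set H))) :=
      image_closure_subset_closure_image K.continuous ⟨x, hXsub hx, rfl⟩
    have h3 : ⇑K '' (⋃ n, closure ((span ℝ (S n) : Submodule ℝ H) : Set H)) ⊆ ⋃ n, S n := by
      rintro _ ⟨y, hy, rfl⟩
      obtain ⟨n, hn⟩ := Set.mem_iUnion.mp hy
      refine Set.mem_iUnion.mpr ⟨n + 1, ?_⟩
      rw [hSsucc]
      exact Set.mem_union_left _ (Set.mem_union_right _ ⟨y, hn, rfl⟩)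
    exact hclX (closure_mono h3 h2)
  have hNi : ∀ x ∈ X, N x ∈ X := by
    intro x hx
    have h2 : N x ∈ closure (N '' (⋃ n, closure ((span ℝ (S n) : Submodule ℝ H) : Set H))) :=
      image_closure_subset_closure_image hNcont ⟨x, hXsub hx, rfl⟩
    have h3 : N '' (⋃ n, closure ((span ℝ (S n) : Submodule ℝ H) : Set H)) ⊆ ⋃ n, S n := by
      rintro _ ⟨y, hy, rfl⟩
      obtain ⟨n, hn⟩ := Set.mem_iUnion.mp hy
      refine Set.mem_iUnion.mpr ⟨n + 1, ?_⟩
      rw [hSsucc]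
      exact Set.mem_union_right _ ⟨y, hn, rfl⟩
    exact hclX (closure_mono h3 h2)
  have hvX : v ∈ X := by
    have h1 : v ∈ ⋃ n, S n := Set.mem_iUnion.mpr ⟨0, rfl⟩
    exact Submodule.le_topologicalClosure _ (Submodule.subset_span h1)
  exact ⟨X, hXc, hXsep, hvX, hKi, hNi⟩

set_option maxHeartbeats 2000000 in
/-- If `K` is a compact monotone bounded linear operator on a real Hilbert
space and `N` is continuous, bounded (maps bounded sets to bounded sets), and strongly
dissipative with constant `β > 0`, then for every `v` the equation `u = K (N u) + K v`
has exactly one solution. -/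
theorem existence_uniqueness_fixed_point
    {H : Type*} [NormedAddCommGroup H] [InnerProductSpace ℝ H] [CompleteSpace H]
    (K : H →L[ℝ] H) (hKcomp : IsCompactOperator (⇑K))
    (hKmono : ∀ u : H, 0 ≤ ⟪K u, u⟫)
    (β : ℝ) (hβ : 0 < β)
    (N : H → H) (hNcont : Continuous N)
    (hNbdd : ∀ s : Set H, Bornology.IsBounded s → Bornology.IsBounded (N '' s))
    (hN : ∀ u₁ u₂ : H, ⟪N u₁ - N u₂, u₁ - u₂⟫ ≤ -β * ‖u₁ - u₂‖ ^ 2)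
    (v : H) :
    ∃! u : H, u = K (N u) + K v := by
  classical
  obtain ⟨X, hXc, hXsep, hvX, hKX, hNX⟩ := exists_invariant K N hNcont v
  -- the regularized problems on `WithLp 2 (H × H)`
  set Ep := WithLp 2 (H × H) with hEp
  set eqv : Ep ≃ H × H := WithLp.equiv 2 (H × H) with heqv
  set cle : Ep ≃L[ℝ] H × H := WithLp.prodContinuousLinearEquiv 2 ℝ H H with hcle
  set XX : Submodule ℝ Ep :=
    Submodule.comap ((WithLp.linearEquiv 2 ℝ (H × H) : Ep ≃ₗ[ℝ] H × H) :
      Ep →ₗ[ℝ] H × H) (X.prod X) with hXX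
  have hmemXX : ∀ p : Ep, p ∈ XX ↔ p.fst ∈ X ∧ p.snd ∈ X := fun p => Iff.rfl
  have hfstc : Continuous fun p : Ep => p.fst := continuous_fst.comp cle.continuous
  have hsndc : Continuous fun p : Ep => p.snd := continuous_snd.comp cle.continuous
  have hXXc : IsClosed (XX : Set Ep) := by
    have h1 : (XX : Set Ep) = ⇑cle ⁻¹' ((X : Set H) ×ˢ (X : Set H)) := rfl
    rw [h1]
    exact (hXc.prod hXc).preimage cle.continuous
  have hXXsep : TopologicalSpace.IsSeparable (XX : Set Ep) := by
    have h1 : TopologicalSpace.IsSeparable ((X : Set H) ×ˢ (X : Set H)) := hXsep.prod hXsep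
    have h2 := h1.image cle.symm.continuous
    have h3 : ⇑cle.symm '' ((X : Set H) ×ˢ (X : Set H)) = (XX : Set Ep) := by
      ext p
      constructor
      · rintro ⟨q, hq, rfl⟩
        exact (hmemXX _).mpr ⟨hq.1, hq.2⟩
      · intro hp
        exact ⟨cle p, ⟨((hmemXX p).mp hp).1, ((hmemXX p).mp hp).2⟩, cle.symm_apply_apply p⟩
    rwa [h3] at h2
  -- solve the regularized problem for each ε = 1/(k+1)
  have hsol : ∀ k : ℕ, ∃ u w : H, u ∈ X ∧ w = -(N u) ∧
      u + K w + (1 / (k + 1 : ℝ)) • w = K v := by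
    intro k
    set ε : ℝ := 1 / (k + 1 : ℝ) with hε
    have hεpos : 0 < ε := by positivity
    set F : Ep → Ep := fun p =>
      eqv.symm (-(N p.fst) - p.snd, p.fst + K p.snd + ε • p.snd) with hF
    have hFc : Continuous F := by
      have hg : Continuous fun p : Ep => (-(N p.fst) - p.snd, p.fst + K p.snd + ε • p.snd) :=
        (((hNcont.comp hfstc).neg).sub hsndc).prodMk
          ((hfstc.add (K.continuous.comp hsndc)).add (hsndc.const_smul ε))
      exact cle.symm.continuous.comp hg
    have hFmono : ∀ p q : Ep, min β ε * ‖p - q‖ ^ 2 ≤ ⟪F p - F q, p - q⟫ := by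
      intro p q
      have t1 : (F p - F q).fst = -(N p.fst - N q.fst) - (p.snd - q.snd) := by
        show (-(N p.fst) - p.snd) - (-(N q.fst) - q.snd) = _
        abel
      have t2 : (F p - F q).snd
          = (p.fst - q.fst) + K (p.snd - q.snd) + ε • (p.snd - q.snd) := by
        show (p.fst + K p.snd + ε • p.snd) - (q.fst + K q.snd + ε • q.snd) = _
        rw [map_sub, smul_sub]
        abel
      have t3 : (p - q).fst = p.fst - q.fst := rfl
      have t4 : (p - q).snd = p.snd - q.snd := rfl
      rw [WithLp.prod_inner_apply, WithLp.ofLp_fst, WithLp.ofLp_snd, WithLp.ofLp_fst, WithLp.ofLp_snd,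
        WithLp.prod_norm_sq_eq_of_L2, t1, t2, t3, t4]
      set a : H := p.fst - q.fst
      set c : H := p.snd - q.snd
      have e1 : (⟪-(N p.fst - N q.fst) - c, a⟫ : ℝ) = -⟪N p.fst - N q.fst, a⟫ - ⟪c, a⟫ := by
        rw [inner_sub_left, inner_neg_left]
      have e2 : (⟪a + K c + ε • c, c⟫ : ℝ) = ⟪a, c⟫ + ⟪K c, c⟫ + ε * ‖c‖ ^ 2 := by
        rw [inner_add_left, inner_add_left, real_inner_smul_left, real_inner_self_eq_norm_sq]
      have e3 : (⟪c, a⟫ : ℝ) = ⟪a, c⟫ := real_inner_comm _ _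
      have h5 := hN p.fst q.fst
      have h6 := hKmono c
      rw [e1, e2, e3]
      have h7 := mul_le_mul_of_nonneg_right (min_le_left β ε) (sq_nonneg ‖a‖)
      have h8 := mul_le_mul_of_nonneg_right (min_le_right β ε) (sq_nonneg ‖c‖)
      nlinarith [h5, h6, h7, h8]
    have hFXX : ∀ p ∈ XX, F p ∈ XX := by
      intro p hp
      obtain ⟨h1, h2⟩ := (hmemXX p).mp hp
      refine (hmemXX (F p)).mpr ⟨?_, ?_⟩
      · show -(N p.fst) - p.snd ∈ X
        exact X.sub_mem (X.neg_mem (hNX _ h1)) h2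
      · show p.fst + K p.snd + ε • p.snd ∈ X
        exact X.add_mem (X.add_mem h1 (hKX _ h2)) (X.smul_mem _ h2)
    have hbXX : eqv.symm (0, K v) ∈ XX :=
      (hmemXX _).mpr ⟨X.zero_mem, hKX _ hvX⟩
    obtain ⟨p, hpXX, hFp⟩ := galerkin_surj F hFc (min β ε) (lt_min hβ hεpos) hFmono
      XX hXXc hXXsep hFXX (eqv.symm (0, K v)) hbXX
    refine ⟨p.fst, p.snd, ((hmemXX p).mp hpXX).1, ?_, ?_⟩
    · have e1 : -(N p.fst) - p.snd = (0 : H) := congrArg (fun q : Ep => q.fst) hFp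
      have : -(N p.fst) = p.snd := by
        have := sub_eq_zero.mp e1
        exact this
      exact this.symm
    · exact congrArg (fun q : Ep => q.snd) hFp
  choose uf wf hufX hwf heq using hsol
  set εk : ℕ → ℝ := fun k => 1 / (k + 1 : ℝ) with hεk
  have hεkpos : ∀ k, 0 < εk k := fun k => by positivity
  have hεkle : ∀ k, εk k ≤ 1 := by
    intro k
    rw [hεk]
    rw [div_le_one (by positivity)]
    linarith [Nat.cast_nonneg (α := ℝ) k]
  -- a priori bound for uf
  set C₁ : ℝ := ‖N 0‖ + ‖v‖ with hC₁
  set C₂ : ℝ := ‖v‖ ^ 2 / 2 with hC₂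
  set R : ℝ := (C₁ + C₂) / β + 1 with hR
  have hC₁0 : 0 ≤ C₁ := by positivity
  have hC₂0 : 0 ≤ C₂ := by positivity
  have hR1 : 1 ≤ R := by
    rw [hR]
    have : 0 ≤ (C₁ + C₂) / β := by positivity
    linarith
  have hubound : ∀ k, ‖uf k‖ ≤ R := by
    intro k
    have hKvw : K (v - wf k) = uf k + εk k • wf k := by
      rw [map_sub, ← heq k]
      abel
    have h0 := hKmono (v - wf k)
    rw [hKvw] at h0
    have base : 0 ≤ (⟪uf k, v⟫ : ℝ) - ⟪uf k, wf k⟫ + εk k * ⟪wf k, v⟫ - εk k * ‖wf k‖ ^ 2 := by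
      have h1 : (⟪uf k + εk k • wf k, v - wf k⟫ : ℝ)
          = ⟪uf k, v⟫ - ⟪uf k, wf k⟫ + εk k * ⟪wf k, v⟫ - εk k * ‖wf k‖ ^ 2 := by
        rw [inner_add_left, inner_sub_right, inner_sub_right, real_inner_smul_left,
          real_inner_smul_left, real_inner_self_eq_norm_sq]
        ring
      rw [h1] at h0
      exact h0
    -- lower bound for ⟪uf k, wf k⟫
    have hlow : β * ‖uf k‖ ^ 2 - ‖N 0‖ * ‖uf k‖ ≤ (⟪uf k, wf k⟫ : ℝ) := by
      have h2 := hN (uf k) 0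
      rw [sub_zero] at h2
      have h3 : (⟪N (uf k) - N 0, uf k⟫ : ℝ) = ⟪N (uf k), uf k⟫ - ⟪N 0, uf k⟫ := by
        rw [inner_sub_left]
      rw [h3] at h2
      have h4 : (⟪uf k, wf k⟫ : ℝ) = -⟪N (uf k), uf k⟫ := by
        rw [hwf k, inner_neg_right, real_inner_comm]
      have h5 : (⟪N 0, uf k⟫ : ℝ) ≤ ‖N 0‖ * ‖uf k‖ := real_inner_le_norm _ _
      rw [h4]
      nlinarith
    have s1 : (⟪uf k, v⟫ : ℝ) ≤ ‖uf k‖ * ‖v‖ := real_inner_le_norm _ _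
    have s2 : εk k * (⟪wf k, v⟫ : ℝ) ≤ εk k * (‖wf k‖ * ‖v‖) :=
      mul_le_mul_of_nonneg_left (real_inner_le_norm _ _) (hεkpos k).le
    have s3 : ‖wf k‖ * ‖v‖ ≤ ‖wf k‖ ^ 2 / 2 + ‖v‖ ^ 2 / 2 := by
      nlinarith [sq_nonneg (‖wf k‖ - ‖v‖)]
    have s4 : εk k * (‖wf k‖ ^ 2 / 2 + ‖v‖ ^ 2 / 2) - εk k * ‖wf k‖ ^ 2
        ≤ ‖v‖ ^ 2 / 2 := by
      have h7 : εk k * (‖v‖ ^ 2 / 2) ≤ ‖v‖ ^ 2 / 2 := by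
        nlinarith [hεkle k, hεkpos k, sq_nonneg ‖v‖]
      nlinarith [mul_nonneg (hεkpos k).le (sq_nonneg ‖wf k‖)]
    have key : β * ‖uf k‖ ^ 2 ≤ C₁ * ‖uf k‖ + C₂ := by
      have t5 := mul_le_mul_of_nonneg_left s3 (hεkpos k).le
      rw [hC₁, hC₂]
      nlinarith [base, hlow, s1, s2, t5, s4]
    by_contra hcon
    push_neg at hcon
    have h8 : R * R < ‖uf k‖ * ‖uf k‖ := by
      have := hcon
      nlinarith [hR1]
    have h9 : β * (R * ‖uf k‖) ≤ β * ‖uf k‖ ^ 2 := by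
      have : R * ‖uf k‖ ≤ ‖uf k‖ ^ 2 := by nlinarith [hR1, hcon]
      exact mul_le_mul_of_nonneg_left this hβ.le
    have h10 : C₁ + C₂ + β ≤ β * R := by
      have heq10 : β * R = C₁ + C₂ + β := by
        rw [hR]
        field_simp
      linarith [heq10]
    nlinarith [key, hcon, hR1, hC₂0, hβ, h8, h9,
      mul_le_mul_of_nonneg_right h10 (norm_nonneg (uf k))]
  -- bound for wf
  obtain ⟨C₃, hC₃⟩ := isBounded_iff_forall_norm_le.mp
    (hNbdd (Metric.closedBall 0 R) Metric.isBounded_closedBall)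
  set C₄ : ℝ := max C₃ 0 with hC₄
  have hwbound : ∀ k, ‖wf k‖ ≤ C₄ := by
    intro k
    rw [hwf k, norm_neg]
    refine le_trans (hC₃ _ ⟨uf k, ?_, rfl⟩) (le_max_left _ _)
    rw [Metric.mem_closedBall, dist_zero_right]
    exact hubound k
  have hC₄0 : 0 ≤ C₄ := le_max_right _ _
  -- compactness and passage to the limit
  have hvnb : Bornology.IsVonNBounded ℝ (Metric.closedBall (0 : H) C₄) :=
    NormedSpace.isVonNBounded_closedBall ℝ H C₄
  obtain ⟨Cset, hCcomp, hCsub⟩ :=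
    IsCompactOperator.image_subset_compact_of_isVonNBounded (𝕜₁ := ℝ)
      (f := (K : H →ₗ[ℝ] H)) hKcomp hvnb
  have hKwmem : ∀ k, K (wf k) ∈ Cset := by
    intro k
    refine hCsub ⟨wf k, ?_, rfl⟩
    rw [Metric.mem_closedBall, dist_zero_right]
    exact hwbound k
  obtain ⟨aK, haKC, φ, hφmono, hφtend⟩ := hCcomp.tendsto_subseq hKwmem
  -- limits
  have hεsmall : Tendsto (fun i => εk (φ i) • wf (φ i)) atTop (𝓝 0) := by
    have hb2 : ∀ i, ‖εk (φ i) • wf (φ i)‖ ≤ (1 / (i + 1 : ℝ)) * C₄ := by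
      intro i
      rw [norm_smul, Real.norm_eq_abs, abs_of_pos (hεkpos (φ i))]
      have h1 : εk (φ i) ≤ 1 / (i + 1 : ℝ) := by
        rw [hεk]
        apply one_div_le_one_div_of_le (by positivity)
        have hle : (i : ℕ) ≤ φ i := hφmono.le_apply
        have : (i : ℝ) ≤ (φ i : ℝ) := Nat.cast_le.mpr hle
        linarith [this]
      exact mul_le_mul h1 (hwbound (φ i)) (norm_nonneg _) (by positivity)
    have hb3 : Tendsto (fun i : ℕ => (1 / (i + 1 : ℝ)) * C₄) atTop (𝓝 0) := by
      have := (tendsto_one_div_add_atTop_nhds_zero_nat (𝕜 := ℝ)).mul_const C₄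
      simpa using this
    exact squeeze_zero_norm hb2 hb3
  have hueq : ∀ k, uf k = K v - K (wf k) - εk k • wf k := by
    intro k
    rw [← heq k]
    abel
  have hutend : Tendsto (fun i => uf (φ i)) atTop (𝓝 (K v - aK)) := by
    have h1 : (fun i => uf (φ i))
        = fun i => K v - (fun k => K (wf k)) (φ i) - εk (φ i) • wf (φ i) :=
      funext fun i => hueq (φ i)
    rw [h1]
    have h2 := (tendsto_const_nhds (x := K v) (α := ℕ)).sub hφtend
    have h3 := h2.sub hεsmall
    simpa using h3
  set u₀ : H := K v - aK with hu₀
  have hNtend : Tendsto (fun i => N (uf (φ i))) atTop (𝓝 (N u₀)) :=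
    (hNcont.tendsto _).comp hutend
  have hwtend : Tendsto (fun i => wf (φ i)) atTop (𝓝 (-(N u₀))) := by
    have h1 : (fun i => wf (φ i)) = fun i => -(N (uf (φ i))) := funext fun i => hwf (φ i)
    rw [h1]
    exact hNtend.neg
  have hKwtend : Tendsto (fun i => K (wf (φ i))) atTop (𝓝 (K (-(N u₀)))) :=
    (K.continuous.tendsto _).comp hwtend
  have haK2 : aK = K (-(N u₀)) := tendsto_nhds_unique hφtend hKwtend
  have hfixed : u₀ = K (N u₀) + K v := by
    have hneg : aK = -(K (N u₀)) := by rw [haK2, map_neg]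
    conv_lhs => rw [hu₀]
    rw [hneg, sub_neg_eq_add, add_comm]
  -- uniqueness
  refine ⟨u₀, hfixed, ?_⟩
  intro y hy
  have hdd : y - u₀ = K (N y - N u₀) := by
    rw [map_sub]
    conv_lhs => rw [hy, hfixed]
    abel
  have h1 := hN y u₀
  have h2 : (⟪N y - N u₀, y - u₀⟫ : ℝ) = ⟪K (N y - N u₀), N y - N u₀⟫ := by
    rw [hdd, real_inner_comm]
  have h3 := hKmono (N y - N u₀)
  have h4 : ‖y - u₀‖ ^ 2 ≤ 0 := by nlinarith
  have h5 : ‖y - u₀‖ = 0 := by nlinarith [sq_nonneg ‖y - u₀‖, norm_nonneg (y - u₀)]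
  have h6 : y - u₀ = 0 := norm_eq_zero.mp h5
  exact sub_eq_zero.mp h6
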